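/- Let p be an odd prime, h a symmetric 2n×2n matrix over ℤ_p with det(h) ≠ 0, and k, n positive integers with k ≥ n+1. Then for every G in M_{2n}(ℤ_p) with 2·v_p(det G) ≤ v_p(det h) and every integer d with 0 ≤ d ≤ 2n and d ≥ 4n - 2k, the quantity ⌊(1/2)v_p(det h) - n + d/2⌋·(2n+1-2k) + ⌊(2n - d/2)(2n - d/2 - 2k)⌋ is greater than or equal to (v_p(det h) - e)·(n - k + 1/2) + n(n - 2k) + e·(n - k), where e = 0 if v_p(det h) is even and e = 1 if v_p(det h) is odd. -/

import Mathlib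

open Matrix

lemma flhalf' (a : ℤ) : ⌊((a:ℚ) + 1/2)⌋ = a := by
  rw [Int.floor_intCast_add]; norm_num

lemma flq' (a : ℤ) : ⌊((a:ℚ) + 1/4)⌋ = a := by
  rw [Int.floor_intCast_add]; norm_num

lemma consec' (x : ℤ) : 0 ≤ x * (x - 1) := by
  rcases le_or_gt x 0 with hx | hx
  · nlinarith
  · nlinarith [Int.add_one_le_iff.mpr hx]

theorem siegel_series_inequality_large_d (p : ℕ) (hp : p.Prime) (hodd : p ≠ 2)
    [Fact p.Prime] (n k : ℕ) (hn : 0 < n) (hk : n + 1 ≤ k)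
    (h : Matrix (Fin (2 * n)) (Fin (2 * n)) ℤ_[p]) (hsym : h.IsSymm)
    (hdet : h.det ≠ 0)
    (G : Matrix (Fin (2 * n)) (Fin (2 * n)) ℤ_[p])
    (hG : 2 * (G.det).valuation ≤ (h.det).valuation)
    (d : ℕ) (hd : d ≤ 2 * n) (hd' : (4 * n : ℤ) - 2 * k ≤ d)
    (e : ℤ) (he : e = if Even (h.det).valuation then 0 else 1) :
    ((⌊((h.det).valuation : ℚ) / 2 - n + (d : ℚ) / 2⌋ : ℚ) * (2 * n + 1 - 2 * k)
        + (⌊((2 * n : ℚ) - d / 2) * ((2 * n : ℚ) - d / 2 - 2 * k)⌋ : ℚ))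
      ≥ (((h.det).valuation : ℚ) - e) * (n - k + 1 / 2)
          + n * (n - 2 * k) + e * (n - k) := by
  set v := (h.det).valuation with hv
  have hk' : (n : ℚ) + 1 ≤ (k : ℚ) := by exact_mod_cast hk
  rcases Nat.even_or_odd v with ⟨m, hm⟩ | ⟨m, hm⟩
  · -- v even, e = 0
    have he0 : e = 0 := by rw [he, if_pos ⟨m, hm⟩]
    rcases Nat.even_or_odd d with ⟨s, hs⟩ | ⟨s, hs⟩
    · -- d even
      have h1 : ((v:ℚ) / 2 - n + (d:ℚ)/2) = ((m + s - n : ℤ) : ℚ) := by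
        rw [hm, hs]; push_cast; ring
      have h2 : ((2*n:ℚ) - d/2) * ((2*n:ℚ) - d/2 - 2*k)
          = (((2*n - s) * (2*n - s - 2*k) : ℤ) : ℚ) := by
        rw [hs]; push_cast; ring
      rw [h1, h2, Int.floor_intCast, Int.floor_intCast, he0, hm]
      have key : (0:ℚ) ≤ ((n:ℚ) - s) * ((n:ℚ) - s - 1) := by
        exact_mod_cast consec' ((n:ℤ) - s)
      push_cast
      nlinarith [key]
    · -- d odd
      have h1 : ((v:ℚ) / 2 - n + (d:ℚ)/2) = ((m + s - n : ℤ) : ℚ) + 1/2 := by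
        rw [hm, hs]; push_cast; ring
      have h2 : ((2*n:ℚ) - d/2) * ((2*n:ℚ) - d/2 - 2*k)
          = (((2*n - s)^2 - (2*k+1)*(2*n-s) + k : ℤ) : ℚ) + 1/4 := by
        rw [hs]; push_cast; ring
      rw [h1, h2, flhalf', flq', he0, hm]
      have key : (0:ℚ) ≤ ((n:ℚ) - s) * ((n:ℚ) - s - 1) := by
        exact_mod_cast consec' ((n:ℤ) - s)
      have hu : (2*n : ℤ) - k ≤ s := by omega
      have hu' : (2*n : ℚ) - k ≤ s := by exact_mod_cast hu
      push_cast
      nlinarith [key, hu']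
  · -- v odd, e = 1
    have he1 : e = 1 := by
      rw [he, if_neg]; exact Nat.not_even_iff_odd.mpr ⟨m, hm⟩
    rcases Nat.even_or_odd d with ⟨s, hs⟩ | ⟨s, hs⟩
    · -- d even
      have h1 : ((v:ℚ) / 2 - n + (d:ℚ)/2) = ((m + s - n : ℤ) : ℚ) + 1/2 := by
        rw [hm, hs]; push_cast; ring
      have h2 : ((2*n:ℚ) - d/2) * ((2*n:ℚ) - d/2 - 2*k)
          = (((2*n - s) * (2*n - s - 2*k) : ℤ) : ℚ) := by
        rw [hs]; push_cast; ring
      rw [h1, h2, flhalf', Int.floor_intCast, he1, hm]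
      have key : (0:ℚ) ≤ ((n:ℚ) - s) * ((n:ℚ) - s - 1) := by
        exact_mod_cast consec' ((n:ℤ) - s)
      push_cast
      nlinarith [key, hk']
    · -- d odd
      have h1 : ((v:ℚ) / 2 - n + (d:ℚ)/2) = ((m + s + 1 - n : ℤ) : ℚ) := by
        rw [hm, hs]; push_cast; ring
      have h2 : ((2*n:ℚ) - d/2) * ((2*n:ℚ) - d/2 - 2*k)
          = (((2*n - s)^2 - (2*k+1)*(2*n-s) + k : ℤ) : ℚ) + 1/4 := by
        rw [hs]; push_cast; ring
      rw [h1, h2, Int.floor_intCast, flq', he1, hm]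
      push_cast
      nlinarith [sq_nonneg ((n:ℚ) - s - 1)]
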